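/- Let m1 ≥ 2, B = m1/(2(m1-1)), and let r solve the (m0,m1)-ODE. Suppose c ∈ ℝ satisfies c > Z_α and |β(x)/α(x)| ≤ B for all x ≥ c (where Z_α is the unique zero of α). If r'(x0) > B for some x0 > c, then r''(x) > 0 for all x ≥ x0; consequently r'(x) ≥ r'(x0) > B for all x ≥ x0 and lim_{x→∞} r(x) = ∞. -/

import Mathlib

open Filter

noncomputable def artanh (x : ℝ) : ℝ := (1/2) * Real.log ((1 + x) / (1 - x))

lemma tanh_gt_of_artanh_lt {k x : ℝ} (h1 : -1 < k) (h2 : k < 1) (hx : artanh k < x) :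
    k < Real.tanh x := by
  have hq : 0 < (1 + k) / (1 - k) := by
    apply div_pos <;> linarith
  have hexp : (1 + k) / (1 - k) < Real.exp (2 * x) := by
    have : Real.log ((1 + k) / (1 - k)) < 2 * x := by
      unfold artanh at hx; linarith
    calc (1 + k) / (1 - k) = Real.exp (Real.log ((1+k)/(1-k))) := (Real.exp_log hq).symm
      _ < Real.exp (2 * x) := Real.exp_lt_exp.mpr this
  rw [Real.tanh_eq_sinh_div_cosh, Real.sinh_eq, Real.cosh_eq]
  have hp := Real.exp_pos x
  have hp' := Real.exp_pos (-x)
  have hcosh : 0 < (Real.exp x + Real.exp (-x)) / 2 := by positivity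
  rw [lt_div_iff₀ hcosh]
  have h2x : Real.exp (2 * x) = Real.exp x * Real.exp x := by
    rw [← Real.exp_add]; ring_nf
  have hinv : Real.exp (-x) = 1 / Real.exp x := by
    rw [Real.exp_neg]; exact inv_eq_one_div _
  rw [h2x] at hexp
  rw [div_lt_iff₀ (by linarith : (0:ℝ) < 1 - k)] at hexp
  have key : (1 - k) * Real.exp x > (1 + k) * Real.exp (-x) := by
    rw [hinv, gt_iff_lt, mul_one_div, div_lt_iff₀ hp]
    nlinarith
  nlinarith

/-- If |β/α| ≤ B = m1/(2(m1-1)) beyond c > Z_α and r'(x0) > B at some x0 > c,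
then r'' > 0 on [x0,∞), hence r' ≥ r'(x0) > B there and r(x) → ∞. -/
theorem blow_up_of_large_slope (m0 m1 : ℕ) (hm0 : 2 ≤ m0) (hm1 : 2 ≤ m1)
    (α β : ℝ → ℝ)
    (hα : ∀ x, α x = (1/2) * (((m0:ℝ) + m1 - 2) * Real.tanh x + m1 - m0))
    (hβ : ∀ x, β x = (1/4) * (((m0:ℝ) + m1) * Real.tanh x + m1 - m0))
    (B : ℝ) (hB : B = (m1:ℝ) / (2 * ((m1:ℝ) - 1)))
    (r r' : ℝ → ℝ)
    (hr : ∀ x, HasDerivAt r (r' x) x)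
    (hr' : ∀ x, HasDerivAt r' (α x * r' x - β x * Real.sin (2 * r x)) x)
    (c : ℝ) (hc : artanh (((m0:ℝ) - m1) / ((m0:ℝ) + m1 - 2)) < c)
    (hquot : ∀ x : ℝ, c ≤ x → |β x / α x| ≤ B)
    (x0 : ℝ) (hx0 : c < x0) (hslope : B < r' x0) :
    (∀ x : ℝ, x0 ≤ x → 0 < α x * r' x - β x * Real.sin (2 * r x)) ∧
      (∀ x : ℝ, x0 ≤ x → r' x0 ≤ r' x) ∧
      Tendsto r atTop atTop := by
  have hm0' : (2:ℝ) ≤ m0 := by exact_mod_cast hm0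
  have hm1' : (2:ℝ) ≤ m1 := by exact_mod_cast hm1
  have hBpos : 0 < B := by
    rw [hB]; apply div_pos (by linarith) (by linarith)
  -- α is positive beyond c
  have hαpos : ∀ x, c ≤ x → 0 < α x := by
    intro x hx
    have hk1 : -1 < ((m0:ℝ) - m1) / ((m0:ℝ) + m1 - 2) := by
      rw [neg_lt, ← neg_div, neg_sub, div_lt_one (by linarith : (0:ℝ) < (m0:ℝ) + m1 - 2)]
      linarith
    have hk2 : ((m0:ℝ) - m1) / ((m0:ℝ) + m1 - 2) < 1 := by
      rw [div_lt_one (by linarith : (0:ℝ) < (m0:ℝ) + m1 - 2)]; linarith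
    have ht := tanh_gt_of_artanh_lt hk1 hk2 (lt_of_lt_of_le hc hx)
    rw [div_lt_iff₀ (by linarith : (0:ℝ) < (m0:ℝ) + m1 - 2)] at ht
    rw [hα]; nlinarith
  -- continuity of r'
  have hcont : Continuous r' := by
    rw [continuous_iff_continuousAt]; intro x; exact (hr' x).continuousAt
  -- positivity of r'' given slope > B
  have hpos : ∀ y, c ≤ y → B < r' y → 0 < α y * r' y - β y * Real.sin (2 * r y) := by
    intro y hy hry
    have hαy := hαpos y hy
    have hb : |β y| ≤ B * α y := by
      have h := hquot y hy
      rw [abs_div, div_le_iff₀ (abs_pos.mpr (ne_of_gt hαy))] at h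
      rwa [abs_of_pos hαy] at h
    have hs : |Real.sin (2 * r y)| ≤ 1 := Real.abs_sin_le_one _
    have h1 : β y * Real.sin (2 * r y) ≤ B * α y := by
      calc β y * Real.sin (2 * r y) ≤ |β y * Real.sin (2 * r y)| := le_abs_self _
        _ = |β y| * |Real.sin (2 * r y)| := abs_mul _ _
        _ ≤ (B * α y) * 1 := by
            apply mul_le_mul hb hs (abs_nonneg _) (by positivity)
        _ = B * α y := mul_one _
    nlinarith
  -- key: r' stays above B
  have hkey : ∀ x, x0 ≤ x → B < r' x := by
    by_contra hcon
    push_neg at hcon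
    obtain ⟨z, hz, hzB⟩ := hcon
    set T : Set ℝ := Set.Ici x0 ∩ r' ⁻¹' Set.Iic B with hT
    have hTne : T.Nonempty := ⟨z, hz, hzB⟩
    have hTbdd : BddBelow T := ⟨x0, fun y hy => hy.1⟩
    have hTcl : IsClosed T := (isClosed_Ici).inter (isClosed_Iic.preimage hcont)
    set t := sInf T with ht
    have htmem : t ∈ T := hTcl.csInf_mem hTne hTbdd
    have htx0 : x0 ≤ t := htmem.1
    have htB : r' t ≤ B := htmem.2
    have htne : x0 < t := lt_of_le_of_ne htx0 (fun h => by rw [← h] at htB; linarith)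
    have hbefore : ∀ y, x0 ≤ y → y < t → B < r' y := by
      intro y h1 h2
      by_contra h3
      push_neg at h3
      exact absurd (csInf_le hTbdd ⟨h1, h3⟩) (not_le.mpr h2)
    have hmono : StrictMonoOn r' (Set.Icc x0 t) := by
      apply strictMonoOn_of_deriv_pos (convex_Icc x0 t) (hcont.continuousOn)
      intro y hy
      rw [interior_Icc] at hy
      rw [(hr' y).deriv]
      exact hpos y (le_of_lt (lt_of_lt_of_le hx0 (le_of_lt hy.1)))
        (hbefore y (le_of_lt hy.1) hy.2)
    have : r' x0 < r' t :=
      hmono ⟨le_refl _, le_of_lt htne⟩ ⟨htx0, le_refl _⟩ htne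
    linarith
  refine ⟨?_, ?_, ?_⟩
  · intro x hx
    exact hpos x (le_of_lt (lt_of_lt_of_le hx0 hx)) (hkey x hx)
  · intro x hx
    rcases eq_or_lt_of_le hx with rfl | hlt
    · exact le_refl _
    · have hmono : StrictMonoOn r' (Set.Icc x0 x) := by
        apply strictMonoOn_of_deriv_pos (convex_Icc x0 x) (hcont.continuousOn)
        intro y hy
        rw [interior_Icc] at hy
        rw [(hr' y).deriv]
        exact hpos y (le_of_lt (lt_of_lt_of_le hx0 (le_of_lt hy.1))) (hkey y (le_of_lt hy.1))
      exact le_of_lt (hmono ⟨le_refl _, le_of_lt hlt⟩ ⟨hx, le_refl _⟩ hlt)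
  · -- r x ≥ r x0 + B (x - x0) → ∞
    have hg : MonotoneOn (fun x => r x - B * x) (Set.Ici x0) := by
      apply StrictMonoOn.monotoneOn
      apply strictMonoOn_of_deriv_pos (convex_Ici x0)
      · exact (Continuous.sub (continuous_iff_continuousAt.mpr fun x => (hr x).continuousAt)
          (continuous_const.mul continuous_id)).continuousOn
      · intro y hy
        rw [interior_Ici] at hy
        have hd : HasDerivAt (fun x => r x - B * x) (r' y - B) y := by
          have := (hr y).sub ((hasDerivAt_id y).const_mul B)
          simp only [mul_one] at this
          exact this
        rw [hd.deriv]
        have := hkey y (le_of_lt hy)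
        linarith
    have hlow : ∀ x, x0 ≤ x → r x0 - B * x0 + B * x ≤ r x := by
      intro x hx
      have := hg (Set.self_mem_Ici) hx hx
      simp only at this
      linarith
    apply tendsto_atTop_mono' atTop (eventually_atTop.mpr ⟨x0, hlow⟩)
    apply Tendsto.add_atTop tendsto_const_nhds
    exact (tendsto_id.const_mul_atTop hBpos)
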